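/- Let G be a finite graph with probability weights μ such that μ(I) ≤ μ(N(I)) for every independent set I. Then for every n, every independent set J of the tensor power G^n satisfies μ^{⊗n}(J) ≤ 1/2... equivalently, lim_{n→∞} ᾱ(G^n) ≤ 1/2. -/

import Mathlib

open Finset Filter

/-- `I` is an independent set of vertices in `G`. -/
def IsIndepSet {V : Type*} (G : SimpleGraph V) (I : Finset V) : Prop :=
  ∀ u ∈ I, ∀ v ∈ I, ¬ G.Adj u v

/-- The neighborhood `N(I)`: vertices adjacent to at least one vertex of `I`. -/
noncomputable def nbhd {V : Type*} [Fintype V] (G : SimpleGraph V) (I : Finset V) : Finset V :=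
  @Finset.filter _ (fun v => ∃ u ∈ I, G.Adj u v) (Classical.decPred _) Finset.univ

/-- Measure of a finite set of vertices: sum of the weights. -/
def fmeas {V : Type*} (μ : V → ℝ) (S : Finset V) : ℝ := ∑ v ∈ S, μ v

/-- The `n`-fold tensor (categorical) power of `G`. -/
def tpow {V : Type*} (G : SimpleGraph V) (n : ℕ) : SimpleGraph (Fin n → V) where
  Adj u v := u ≠ v ∧ ∀ i, G.Adj (u i) (v i)
  symm := ⟨fun u v h => ⟨h.1.symm, fun i => (h.2 i).symm⟩⟩
  loopless := ⟨fun u h => h.1 rfl⟩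

/-- Product measure of a set of `n`-tuples. -/
noncomputable def pmeas {V : Type*} (μ : V → ℝ) (n : ℕ) (S : Finset (Fin n → V)) : ℝ :=
  ∑ x ∈ S, ∏ i, μ (x i)

/-- `ᾱ(G)`: the supremum (= maximum) of the measures of independent sets of `G`. -/
noncomputable def alphaBar {V : Type*} (G : SimpleGraph V) (μ : V → ℝ) : ℝ :=
  sSup {x : ℝ | ∃ I : Finset V, IsIndepSet G I ∧ x = fmeas μ I}

/-- `ᾱ(G^n)` with the product measure. -/
noncomputable def alphaPow {V : Type*} (G : SimpleGraph V) (μ : V → ℝ) (n : ℕ) : ℝ :=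
  alphaBar (tpow G n) (fun x => ∏ i, μ (x i))

section Aux

variable {V : Type*} [Fintype V]

lemma mem_nbhd' {G : SimpleGraph V} {S : Finset V} {v : V} :
    v ∈ nbhd G S ↔ ∃ u ∈ S, G.Adj u v := by
  classical
  simp [nbhd]

lemma fmeas_mono {μ : V → ℝ} (hμ0 : ∀ v, 0 ≤ μ v) {S T : Finset V} (h : S ⊆ T) :
    fmeas μ S ≤ fmeas μ T :=
  Finset.sum_le_sum_of_subset_of_nonneg h (fun v _ _ => hμ0 v)

/-- Hall condition for independent sets implies Hall condition for all sets. -/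
lemma hallAll {G : SimpleGraph V} {μ : V → ℝ} (hμ0 : ∀ v, 0 ≤ μ v)
    (hI : ∀ I : Finset V, IsIndepSet G I → fmeas μ I ≤ fmeas μ (nbhd G I)) :
    ∀ S : Finset V, fmeas μ S ≤ fmeas μ (nbhd G S) := by
  classical
  intro S
  set T := nbhd G S with hT
  have hind : IsIndepSet G (S \ T) := by
    intro u hu v hv hadj
    rw [Finset.mem_sdiff] at hu hv
    exact hv.2 (mem_nbhd'.2 ⟨u, hu.1, hadj⟩)
  have hsub : nbhd G (S \ T) ⊆ T \ S := by
    intro v hv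
    obtain ⟨u, hu, hadj⟩ := mem_nbhd'.1 hv
    rw [Finset.mem_sdiff] at hu
    rw [Finset.mem_sdiff]
    exact ⟨mem_nbhd'.2 ⟨u, hu.1, hadj⟩, fun hvS => hu.2 (mem_nbhd'.2 ⟨v, hvS, hadj.symm⟩)⟩
  have h1 : fmeas μ (S \ T) ≤ fmeas μ (T \ S) :=
    le_trans (hI _ hind) (fmeas_mono hμ0 hsub)
  have e1 : fmeas μ (S ∩ T) + fmeas μ (S \ T) = fmeas μ S :=
    Finset.sum_inter_add_sum_sdiff S T μ
  have e2 : fmeas μ (T ∩ S) + fmeas μ (T \ S) = fmeas μ T :=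
    Finset.sum_inter_add_sum_sdiff T S μ
  have e3 : S ∩ T = T ∩ S := Finset.inter_comm S T
  rw [e3] at e1
  linarith

/-- fiber of a set of (n+1)-tuples over the first coordinate -/
noncomputable def fib (n : ℕ) (S : Finset (Fin (n+1) → V)) (a : V) : Finset (Fin n → V) :=
  @Finset.filter _ (fun t => Fin.cons a t ∈ S) (Classical.decPred _) Finset.univ

lemma mem_fib {n : ℕ} {S : Finset (Fin (n+1) → V)} {a : V} {t : Fin n → V} :
    t ∈ fib n S a ↔ Fin.cons a t ∈ S := by
  classical
  simp [fib]

lemma sum_decomp {n : ℕ} (S : Finset (Fin (n+1) → V)) (f : (Fin (n+1) → V) → ℝ) :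
    ∑ x ∈ S, f x = ∑ a : V, ∑ t ∈ fib n S a, f (Fin.cons a t) := by
  classical
  have hfib : ∀ a : V, fib n S a = Finset.filter (fun t => Fin.cons a t ∈ S) Finset.univ := by
    intro a; unfold fib; convert rfl
  have h1 : ∑ x ∈ S, f x = ∑ x : Fin (n+1) → V, if x ∈ S then f x else 0 := by
    rw [Finset.sum_ite_mem, Finset.univ_inter]
  rw [h1, ← Equiv.sum_comp (Fin.consEquiv (fun _ => V))
    (fun x => if x ∈ S then f x else 0), Fintype.sum_prod_type]
  refine Finset.sum_congr rfl (fun a _ => ?_)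
  have h2 : ∀ t : Fin n → V, (Fin.consEquiv (fun _ => V)) (a, t) = Fin.cons a t := fun t => rfl
  rw [hfib a, Finset.sum_filter]
  simp only [h2]

lemma pmeas_decomp (μ : V → ℝ) {n : ℕ} (S : Finset (Fin (n+1) → V)) :
    pmeas μ (n+1) S = ∑ a : V, μ a * pmeas μ n (fib n S a) := by
  unfold pmeas
  rw [sum_decomp S (fun x => ∏ i, μ (x i))]
  refine Finset.sum_congr rfl (fun a _ => ?_)
  rw [Finset.mul_sum]
  refine Finset.sum_congr rfl (fun t _ => ?_)
  rw [Fin.prod_univ_succ]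
  simp

lemma pmeas_nonneg {μ : V → ℝ} (hμ0 : ∀ v, 0 ≤ μ v) {n : ℕ} (S : Finset (Fin n → V)) :
    0 ≤ pmeas μ n S :=
  Finset.sum_nonneg fun x _ => Finset.prod_nonneg fun i _ => hμ0 (x i)

lemma pmeas_mono {μ : V → ℝ} (hμ0 : ∀ v, 0 ≤ μ v) {n : ℕ} {S T : Finset (Fin n → V)}
    (h : S ⊆ T) : pmeas μ n S ≤ pmeas μ n T :=
  Finset.sum_le_sum_of_subset_of_nonneg h
    (fun x _ _ => Finset.prod_nonneg fun i _ => hμ0 (x i))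

lemma pmeas_univ {μ : V → ℝ} (hμ1 : ∑ v, μ v = 1) :
    ∀ n : ℕ, pmeas μ n (Finset.univ : Finset (Fin n → V)) = 1 := by
  intro n
  induction n with
  | zero => simp [pmeas]
  | succ n ih =>
      rw [pmeas_decomp]
      have : ∀ a : V, fib n (Finset.univ : Finset (Fin (n+1) → V)) a = Finset.univ := by
        intro a
        ext t
        simp [mem_fib]
      simp only [this, ih, mul_one]
      exact hμ1

lemma hallPow_one {G : SimpleGraph V} {μ : V → ℝ} (hμ0 : ∀ v, 0 ≤ μ v)
    (hA : ∀ S : Finset V, fmeas μ S ≤ fmeas μ (nbhd G S)) :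
    ∀ S : Finset (Fin 1 → V), pmeas μ 1 S ≤ pmeas μ 1 (nbhd (tpow G 1) S) := by
  classical
  intro S
  have hinj : Function.Injective (fun x : Fin 1 → V => x 0) := by
    intro x y h
    funext i
    have hi : i = 0 := Subsingleton.elim i 0
    rw [hi]; exact h
  have hval : ∀ (W : Finset (Fin 1 → V)), pmeas μ 1 W = fmeas μ (W.image (fun x => x 0)) := by
    intro W
    unfold pmeas fmeas
    rw [Finset.sum_image (fun x _ y _ h => hinj h)]
    exact Finset.sum_congr rfl fun x _ => Fin.prod_univ_one _
  have hsub : nbhd G (S.image (fun x => x 0)) ⊆ (nbhd (tpow G 1) S).image (fun x => x 0) := by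
    intro b hb
    obtain ⟨a, ha, hadj⟩ := mem_nbhd'.1 hb
    obtain ⟨x, hx, rfl⟩ := Finset.mem_image.1 ha
    refine Finset.mem_image.2 ⟨fun _ => b, mem_nbhd'.2 ⟨x, hx, show _ ∧ _ from ⟨?_, ?_⟩⟩, rfl⟩
    · intro h
      exact G.ne_of_adj hadj (congrFun h 0)
    · intro i
      have hi : i = 0 := Subsingleton.elim i 0
      rw [hi]; exact hadj
  calc pmeas μ 1 S = fmeas μ (S.image (fun x => x 0)) := hval S
    _ ≤ fmeas μ (nbhd G (S.image (fun x => x 0))) := hA _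
    _ ≤ fmeas μ ((nbhd (tpow G 1) S).image (fun x => x 0)) := fmeas_mono hμ0 hsub
    _ = pmeas μ 1 (nbhd (tpow G 1) S) := (hval _).symm

lemma hallPow_step {G : SimpleGraph V} {μ : V → ℝ} (hμ0 : ∀ v, 0 ≤ μ v)
    (hA : ∀ S : Finset V, fmeas μ S ≤ fmeas μ (nbhd G S)) {n : ℕ}
    (ih : ∀ S : Finset (Fin n → V), pmeas μ n S ≤ pmeas μ n (nbhd (tpow G n) S)) :
    ∀ S : Finset (Fin (n+1) → V), pmeas μ (n+1) S ≤ pmeas μ (n+1) (nbhd (tpow G (n+1)) S) := by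
  classical
  intro S
  set w : (Fin n → V) → ℝ := fun t => ∏ i, μ (t i) with hw
  have hw0 : ∀ t, 0 ≤ w t := fun t => Finset.prod_nonneg fun i _ => hμ0 (t i)
  set T : V → Finset (Fin n → V) := fun a => nbhd (tpow G n) (fib n S a) with hT
  set A : (Fin n → V) → Finset V :=
    fun t => Finset.filter (fun a => t ∈ T a) Finset.univ with hAdef
  set U : V → Finset (Fin n → V) :=
    fun b => Finset.filter (fun t => b ∈ nbhd G (A t)) Finset.univ with hUdef
  -- first swap
  have key1 : ∑ a : V, μ a * pmeas μ n (T a)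
      = ∑ t : Fin n → V, w t * fmeas μ (A t) := by
    have l1 : ∀ a : V, μ a * pmeas μ n (T a)
        = ∑ t : Fin n → V, if t ∈ T a then μ a * w t else 0 := by
      intro a
      rw [Finset.sum_ite_mem, Finset.univ_inter]
      unfold pmeas
      rw [Finset.mul_sum]
    have l2 : ∀ t : Fin n → V, w t * fmeas μ (A t)
        = ∑ a : V, if t ∈ T a then μ a * w t else 0 := by
      intro t
      rw [hAdef]
      unfold fmeas
      rw [Finset.sum_filter, Finset.mul_sum]
      refine Finset.sum_congr rfl fun a _ => ?_
      split_ifs <;> ring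
    simp only [l1, l2]
    exact Finset.sum_comm
  -- second swap
  have key2 : ∑ t : Fin n → V, w t * fmeas μ (nbhd G (A t))
      = ∑ b : V, μ b * pmeas μ n (U b) := by
    have l1 : ∀ t : Fin n → V, w t * fmeas μ (nbhd G (A t))
        = ∑ b : V, if b ∈ nbhd G (A t) then μ b * w t else 0 := by
      intro t
      unfold fmeas
      rw [Finset.sum_ite_mem, Finset.univ_inter, Finset.mul_sum]
      refine Finset.sum_congr rfl fun b _ => ?_
      ring
    have l2 : ∀ b : V, μ b * pmeas μ n (U b)
        = ∑ t : Fin n → V, if b ∈ nbhd G (A t) then μ b * w t else 0 := by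
      intro b
      rw [hUdef]
      unfold pmeas
      rw [Finset.sum_filter, Finset.mul_sum]
      simp only [mul_ite, mul_zero, hw]
    simp only [l1, l2]
    exact Finset.sum_comm
  -- inclusion
  have hsub : ∀ b : V, U b ⊆ fib n (nbhd (tpow G (n+1)) S) b := by
    intro b t ht
    rw [hUdef, Finset.mem_filter] at ht
    obtain ⟨a, haA, hab⟩ := mem_nbhd'.1 ht.2
    rw [hAdef, Finset.mem_filter] at haA
    obtain ⟨s, hs, hst⟩ := mem_nbhd'.1 haA.2
    rw [mem_fib] at hs
    rw [mem_fib]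
    refine mem_nbhd'.2 ⟨Fin.cons a s, hs, show _ ∧ _ from ⟨?_, ?_⟩⟩
    · intro h
      exact G.ne_of_adj hab (congrFun h 0)
    · intro i
      refine Fin.cases ?_ (fun j => ?_) i
      · simpa using hab
      · simpa using hst.2 j
  calc pmeas μ (n+1) S = ∑ a : V, μ a * pmeas μ n (fib n S a) := pmeas_decomp μ S
    _ ≤ ∑ a : V, μ a * pmeas μ n (T a) :=
        Finset.sum_le_sum fun a _ => mul_le_mul_of_nonneg_left (ih _) (hμ0 a)
    _ = ∑ t : Fin n → V, w t * fmeas μ (A t) := key1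
    _ ≤ ∑ t : Fin n → V, w t * fmeas μ (nbhd G (A t)) :=
        Finset.sum_le_sum fun t _ => mul_le_mul_of_nonneg_left (hA _) (hw0 t)
    _ = ∑ b : V, μ b * pmeas μ n (U b) := key2
    _ ≤ ∑ b : V, μ b * pmeas μ n (fib n (nbhd (tpow G (n+1)) S) b) :=
        Finset.sum_le_sum fun b _ =>
          mul_le_mul_of_nonneg_left (pmeas_mono hμ0 (hsub b)) (hμ0 b)
    _ = pmeas μ (n+1) (nbhd (tpow G (n+1)) S) := (pmeas_decomp μ _).symm

lemma hallPow {G : SimpleGraph V} {μ : V → ℝ} (hμ0 : ∀ v, 0 ≤ μ v)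
    (hA : ∀ S : Finset V, fmeas μ S ≤ fmeas μ (nbhd G S)) :
    ∀ m : ℕ, ∀ S : Finset (Fin (m+1) → V),
      pmeas μ (m+1) S ≤ pmeas μ (m+1) (nbhd (tpow G (m+1)) S) := by
  intro m
  induction m with
  | zero => exact hallPow_one hμ0 hA
  | succ m ih => exact hallPow_step hμ0 hA ih

end Aux

theorem stmt_19 {V : Type*} [Fintype V] (G : SimpleGraph V) (μ : V → ℝ)
    (hμ0 : ∀ v, 0 ≤ μ v) (hμ1 : ∑ v, μ v = 1)
    (hI : ∀ I : Finset V, IsIndepSet G I → fmeas μ I ≤ fmeas μ (nbhd G I)) :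
    (∀ n : ℕ, 1 ≤ n → ∀ J : Finset (Fin n → V),
      IsIndepSet (tpow G n) J → pmeas μ n J ≤ 1 / 2) ∧
    (∀ L : ℝ, Tendsto (fun n => alphaPow G μ n) atTop (nhds L) → L ≤ 1 / 2) := by
  classical
  have hA := hallAll hμ0 hI
  have part1 : ∀ n : ℕ, 1 ≤ n → ∀ J : Finset (Fin n → V),
      IsIndepSet (tpow G n) J → pmeas μ n J ≤ 1 / 2 := by
    intro n hn J hJ
    obtain ⟨m, rfl⟩ : ∃ m, n = m + 1 := ⟨n - 1, (Nat.succ_pred_eq_of_pos hn).symm⟩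
    set N := nbhd (tpow G (m+1)) J with hN
    have hdisj : Disjoint J N := by
      rw [Finset.disjoint_left]
      intro x hxJ hxN
      obtain ⟨u, hu, hadj⟩ := mem_nbhd'.1 hxN
      exact hJ u hu x hxJ hadj
    have hunion : pmeas μ (m+1) J + pmeas μ (m+1) N = pmeas μ (m+1) (J ∪ N) :=
      (Finset.sum_union hdisj).symm
    have hle1 : pmeas μ (m+1) (J ∪ N) ≤ pmeas μ (m+1) Finset.univ :=
      pmeas_mono hμ0 (Finset.subset_univ _)
    have huniv : pmeas μ (m+1) (Finset.univ : Finset (Fin (m+1) → V)) = 1 :=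
      pmeas_univ hμ1 (m+1)
    have hhall : pmeas μ (m+1) J ≤ pmeas μ (m+1) N := hallPow hμ0 hA m J
    linarith
  refine ⟨part1, ?_⟩
  intro L hL
  refine le_of_tendsto hL ?_
  filter_upwards [eventually_ge_atTop 1] with n hn
  unfold alphaPow alphaBar
  refine Real.sSup_le ?_ (by norm_num)
  rintro x ⟨I, hind, rfl⟩
  exact part1 n hn I hind
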